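/- The bracket on the concrete model M_n is K-bilinear, satisfies the Leibniz identity [[x,y],z] = [[x,z],y] + [x,[y,z]] and the metabelian identity [[x,y],[z,t]] = 0 for all x,y,z,t ∈ M_n, and every σ ∈ Equiv.Perm (Fin n) acts on M_n as a bracket-preserving K-linear automorphism. -/

import Mathlib

open MvPolynomial

/-- The concrete model `M_n` of the free metabelian Leibniz algebra `L_n`:
`(α, P)` represents `Σ_i α_i x_i + Σ_{(i,j)} [x_i,x_j]·P(i,j)(r_1,…,r_n)`. -/
noncomputable def lbBracket {K : Type*} [Field K] {n : ℕ}
    (v w : (Fin n → K) × (Fin n × Fin n → MvPolynomial (Fin n) K)) :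
    (Fin n → K) × (Fin n × Fin n → MvPolynomial (Fin n) K) :=
  (0, fun p =>
    C (v.1 p.1 * w.1 p.2)
      + v.2 p * (∑ k, C (w.1 k) * X k)
      + C (v.1 p.1) * (∑ k, (w.2 (p.2, k) - w.2 (k, p.2)) * X k))

/-- The action of `σ ∈ Equiv.Perm (Fin n)` on the model `M_n`, corresponding to
the substitution `x_i ↦ x_{σ(i)}`. -/
noncomputable def permAct {K : Type*} [Field K] {n : ℕ} (σ : Equiv.Perm (Fin n))
    (v : (Fin n → K) × (Fin n × Fin n → MvPolynomial (Fin n) K)) :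
    (Fin n → K) × (Fin n × Fin n → MvPolynomial (Fin n) K) :=
  (v.1 ∘ ⇑σ⁻¹, fun p => rename ⇑σ (v.2 (σ⁻¹ p.1, σ⁻¹ p.2)))

lemma antisym_sum {K : Type*} [CommRing K] {n : ℕ} (Q : Fin n × Fin n → MvPolynomial (Fin n) K) :
    ∑ k, (∑ j, (Q (k,j) - Q (j,k)) * X j) * X k = 0 := by
  have : ∑ k, (∑ j, (Q (k,j) - Q (j,k)) * X j) * X k
      = ∑ k, ∑ j, (Q (k,j) * X j * X k - Q (j,k) * X j * X k) := by
    simp [Finset.sum_mul, sub_mul]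
  rw [this]
  simp only [Finset.sum_sub_distrib]
  rw [Finset.sum_comm (f := fun k j => Q (j,k) * X j * X k)]
  simp [mul_comm, mul_left_comm, mul_assoc]

/-- The bracket on the concrete model `M_n` is `K`-bilinear, satisfies the
Leibniz identity and the metabelian identity, and every permutation
`σ ∈ Equiv.Perm (Fin n)` acts on `M_n` as a bracket-preserving `K`-linear
automorphism. -/
theorem model_is_metabelian_leibniz_with_symmetric_action
    {K : Type*} [Field K] [CharZero K] {n : ℕ} (hn : 2 ≤ n) :
    (∀ v w w' : (Fin n → K) × (Fin n × Fin n → MvPolynomial (Fin n) K),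
      lbBracket v (w + w') = lbBracket v w + lbBracket v w') ∧
    (∀ (c : K) (v w : (Fin n → K) × (Fin n × Fin n → MvPolynomial (Fin n) K)),
      lbBracket v (c • w) = c • lbBracket v w) ∧
    (∀ v v' w : (Fin n → K) × (Fin n × Fin n → MvPolynomial (Fin n) K),
      lbBracket (v + v') w = lbBracket v w + lbBracket v' w) ∧
    (∀ (c : K) (v w : (Fin n → K) × (Fin n × Fin n → MvPolynomial (Fin n) K)),
      lbBracket (c • v) w = c • lbBracket v w) ∧
    (∀ x y z : (Fin n → K) × (Fin n × Fin n → MvPolynomial (Fin n) K),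
      lbBracket (lbBracket x y) z
        = lbBracket (lbBracket x z) y + lbBracket x (lbBracket y z)) ∧
    (∀ x y z t : (Fin n → K) × (Fin n × Fin n → MvPolynomial (Fin n) K),
      lbBracket (lbBracket x y) (lbBracket z t) = 0) ∧
    (∀ (σ : Equiv.Perm (Fin n))
        (v w : (Fin n → K) × (Fin n × Fin n → MvPolynomial (Fin n) K)),
      permAct σ (lbBracket v w) = lbBracket (permAct σ v) (permAct σ w)) ∧
    (∀ (σ : Equiv.Perm (Fin n))
        (v w : (Fin n → K) × (Fin n × Fin n → MvPolynomial (Fin n) K)),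
      permAct σ (v + w) = permAct σ v + permAct σ w) ∧
    (∀ (σ : Equiv.Perm (Fin n)) (c : K)
        (v : (Fin n → K) × (Fin n × Fin n → MvPolynomial (Fin n) K)),
      permAct σ (c • v) = c • permAct σ v) ∧
    (∀ σ : Equiv.Perm (Fin n),
      Function.Bijective
        (permAct σ : (Fin n → K) × (Fin n × Fin n → MvPolynomial (Fin n) K) → _)) := by
  refine ⟨?_, ?_, ?_, ?_, ?_, ?_, ?_, ?_, ?_, ?_⟩
  · intro v w w'
    refine Prod.ext (by simp [lbBracket]) ?_
    funext p
    simp only [lbBracket, Prod.fst_add, Prod.snd_add, Pi.add_apply]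
    have e1 : ∀ k : Fin n, (C (w.1 k + w'.1 k) : MvPolynomial (Fin n) K) * X k
        = C (w.1 k) * X k + C (w'.1 k) * X k := by intro k; rw [map_add, add_mul]
    have e2 : ∀ k : Fin n, ((w.2 (p.2,k) + w'.2 (p.2,k)) - (w.2 (k,p.2) + w'.2 (k,p.2))) * X k
        = (w.2 (p.2,k) - w.2 (k,p.2)) * X k + (w'.2 (p.2,k) - w'.2 (k,p.2)) * X k := by
      intro k; ring
    rw [Finset.sum_congr rfl fun k _ => e1 k, Finset.sum_congr rfl fun k _ => e2 k,
      Finset.sum_add_distrib, Finset.sum_add_distrib, mul_add, map_add]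
    ring
  · intro c v w
    refine Prod.ext (by simp [lbBracket]) ?_
    funext p
    simp only [lbBracket, Prod.smul_fst, Prod.smul_snd, Pi.smul_apply, smul_eq_mul,
      smul_eq_C_mul]
    have e1 : ∀ k : Fin n, (C (c * w.1 k) : MvPolynomial (Fin n) K) * X k
        = C c * (C (w.1 k) * X k) := by intro k; rw [map_mul]; ring
    have e2 : ∀ k : Fin n, ((C c * w.2 (p.2,k)) - (C c * w.2 (k,p.2))) * X k
        = C c * ((w.2 (p.2,k) - w.2 (k,p.2)) * X k) := by intro k; ring
    rw [Finset.sum_congr rfl fun k _ => e1 k, Finset.sum_congr rfl fun k _ => e2 k,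
      ← Finset.mul_sum, ← Finset.mul_sum]
    simp only [map_mul]
    ring
  · intro v v' w
    refine Prod.ext (by simp [lbBracket]) ?_
    funext p
    simp only [lbBracket, Prod.fst_add, Prod.snd_add, Pi.add_apply]
    rw [map_add, add_mul, map_add]
    ring
  · intro c v w
    refine Prod.ext (by simp [lbBracket]) ?_
    funext p
    simp only [lbBracket, Prod.smul_fst, Prod.smul_snd, Pi.smul_apply, smul_eq_mul,
      smul_eq_C_mul]
    simp only [map_mul]
    ring
  · intro x y z
    refine Prod.ext (by simp [lbBracket]) ?_
    funext p
    simp only [lbBracket, Pi.zero_apply, zero_mul, map_zero, mul_zero, zero_add, add_zero,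
      Prod.snd_add, Pi.add_apply, Finset.sum_const_zero]
    have key : ∑ k, ((C (y.1 p.2 * z.1 k) + y.2 (p.2,k) * ∑ m, C (z.1 m) * X m
            + C (y.1 p.2) * ∑ m, (z.2 (k,m) - z.2 (m,k)) * X m)
          - (C (y.1 k * z.1 p.2) + y.2 (k,p.2) * ∑ m, C (z.1 m) * X m
            + C (y.1 k) * ∑ m, (z.2 (p.2,m) - z.2 (m,p.2)) * X m)) * X k
        = C (y.1 p.2) * ∑ m, C (z.1 m) * X m - C (z.1 p.2) * ∑ m, C (y.1 m) * X m
          + (∑ m, (y.2 (p.2,m) - y.2 (m,p.2)) * X m) * ∑ m, C (z.1 m) * X m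
          - (∑ m, (z.2 (p.2,m) - z.2 (m,p.2)) * X m) * ∑ m, C (y.1 m) * X m
          + C (y.1 p.2) * ∑ k, (∑ m, (z.2 (k,m) - z.2 (m,k)) * X m) * X k := by
      have expand : ∀ k : Fin n,
          ((C (y.1 p.2 * z.1 k) + y.2 (p.2,k) * ∑ m, C (z.1 m) * X m
              + C (y.1 p.2) * ∑ m, (z.2 (k,m) - z.2 (m,k)) * X m)
            - (C (y.1 k * z.1 p.2) + y.2 (k,p.2) * ∑ m, C (z.1 m) * X m
              + C (y.1 k) * ∑ m, (z.2 (p.2,m) - z.2 (m,p.2)) * X m)) * X k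
          = C (y.1 p.2) * (C (z.1 k) * X k) - C (z.1 p.2) * (C (y.1 k) * X k)
            + ((y.2 (p.2,k) - y.2 (k,p.2)) * X k) * ∑ m, C (z.1 m) * X m
            - (∑ m, (z.2 (p.2,m) - z.2 (m,p.2)) * X m) * (C (y.1 k) * X k)
            + C (y.1 p.2) * ((∑ m, (z.2 (k,m) - z.2 (m,k)) * X m) * X k) := by
        intro k
        rw [map_mul, map_mul]
        ring
      rw [Finset.sum_congr rfl fun k _ => expand k]
      simp only [Finset.sum_add_distrib, Finset.sum_sub_distrib, ← Finset.mul_sum,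
        ← Finset.sum_mul]
    rw [key, antisym_sum z.2]
    rw [map_mul, map_mul]
    ring
  · intro x y z t
    refine Prod.ext (by simp [lbBracket]) ?_
    funext p
    simp only [lbBracket, Pi.zero_apply, zero_mul, map_zero, mul_zero, zero_add, add_zero,
      Prod.snd_zero, Finset.sum_const_zero]
  · intro σ v w
    refine Prod.ext ?_ ?_
    · funext i; rfl
    · funext p
      simp only [permAct, lbBracket, Function.comp_apply]
      simp only [map_add, map_mul, map_sum, map_sub, rename_C]
      congr 1
      · congr 1
        congr 1
        exact Fintype.sum_equiv σ _ _ fun k => by simp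
      · congr 1
        exact Fintype.sum_equiv σ _ _ fun k => by simp
  · intro σ v w
    refine Prod.ext ?_ ?_
    · funext i; rfl
    · funext p; simp [permAct]
  · intro σ c v
    refine Prod.ext ?_ ?_
    · funext i; rfl
    · funext p; simp [permAct, smul_eq_C_mul]
  · intro σ
    have comp_id : ∀ (τ : Equiv.Perm (Fin n))
        (v : (Fin n → K) × (Fin n × Fin n → MvPolynomial (Fin n) K)),
        permAct τ⁻¹ (permAct τ v) = v := by
      intro τ v
      refine Prod.ext ?_ ?_
      · funext i; simp [permAct]
      · funext p
        simp only [permAct, inv_inv, (show ∀ x, τ⁻¹ (τ x) = x by simp), rename_rename]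
        have h : (⇑τ⁻¹ ∘ ⇑τ) = id := by funext i; simp
        rw [h, rename_id, AlgHom.id_apply]
    exact Function.bijective_iff_has_inverse.2
      ⟨permAct σ⁻¹, fun v => comp_id σ v, fun v => by
        have h := comp_id σ⁻¹ v; rwa [inv_inv] at h⟩
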